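/- There exists a threshold n₀ such that the following holds for all integers m ≥ n ≥ n₀ with n ≥ 10·(ln m)². For every bipartite graph G with parts X of size m and Y of size n (i.e., every edge set E ⊆ X × Y), there exist finitely many pairs (X₁,Y₁), …, (X_q,Y_q) with Xᵢ ⊆ X and Yᵢ ⊆ Y such that the complete bipartite edge sets Xᵢ × Yᵢ are pairwise disjoint, their union equals E, and Σᵢ(|Xᵢ| + |Yᵢ|) ≤ 3mn/ln m. -/

import Mathlib

open Finset in
theorem tuza_aux (X Y : Type) [Fintype X] [Fintype Y] [DecidableEq X] [DecidableEq Y]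
    (n k : ℕ) (hk : 0 < k) (hY : Fintype.card Y = n) (E : Finset (X × Y)) :
    ∃ (q : ℕ) (Xs : Fin q → Finset X) (Ys : Fin q → Finset Y),
      (∀ i j, i ≠ j → Disjoint (Xs i ×ˢ Ys i) (Xs j ×ˢ Ys j)) ∧
      Finset.univ.biUnion (fun i => Xs i ×ˢ Ys i) = E ∧
      (∑ i, ((Xs i).card + (Ys i).card)) ≤ (n / k + 1) * (Fintype.card X + 2 ^ k * k) := by
  classical
  set t := n / k + 1 with ht
  let e : Y ≃ Fin n := Fintype.equivFinOfCardEq hY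
  let Nb : X → Fin t → Finset Y := fun x b =>
    univ.filter (fun y => (x, y) ∈ E ∧ (e y : ℕ) / k = (b : ℕ))
  let Xs0 : Fin t × Finset Y → Finset X := fun p => univ.filter (fun x => Nb x p.1 = p.2)
  let Ys0 : Fin t × Finset Y → Finset Y := fun p => if (Xs0 p).Nonempty then p.2 else ∅
  have hYsub : ∀ p, Ys0 p ⊆ p.2 := by
    intro p
    simp only [Ys0]
    split_ifs <;> simp
  have hmemX : ∀ (x : X) (p : Fin t × Finset Y), x ∈ Xs0 p ↔ Nb x p.1 = p.2 := by
    intro x p; simp [Xs0]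
  -- membership in Nb
  have hmemNb : ∀ (x : X) (b : Fin t) (y : Y),
      y ∈ Nb x b ↔ (x, y) ∈ E ∧ (e y : ℕ) / k = (b : ℕ) := by
    intro x b y; simp [Nb]
  have hNbB : ∀ (x : X) (b : Fin t), Nb x b ⊆ univ.filter (fun y => (e y : ℕ) / k = (b : ℕ)) := by
    intro x b y hy
    rw [hmemNb] at hy
    simp [hy.2]
  have key : ∀ p q : Fin t × Finset Y, p ≠ q →
      Disjoint (Xs0 p ×ˢ Ys0 p) (Xs0 q ×ˢ Ys0 q) := by
    intro p q hpq
    rw [Finset.disjoint_left]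
    rintro ⟨x, y⟩ h1 h2
    rw [Finset.mem_product] at h1 h2
    have hx1 : Nb x p.1 = p.2 := (hmemX x p).1 h1.1
    have hx2 : Nb x q.1 = q.2 := (hmemX x q).1 h2.1
    have hy1 : y ∈ Nb x p.1 := hx1.symm ▸ hYsub p h1.2
    have hy2 : y ∈ Nb x q.1 := hx2.symm ▸ hYsub q h2.2
    have hb : p.1 = q.1 := by
      have e1 := ((hmemNb x p.1 y).1 hy1).2
      have e2 := ((hmemNb x q.1 y).1 hy2).2
      exact Fin.ext (e1 ▸ e2)
    have hT : p.2 = q.2 := by rw [← hx1, ← hx2, hb]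
    exact hpq (Prod.ext hb hT)
  have union : (univ : Finset (Fin t × Finset Y)).biUnion (fun p => Xs0 p ×ˢ Ys0 p) = E := by
    ext ⟨x, y⟩
    simp only [mem_biUnion, mem_product, mem_univ, true_and]
    constructor
    · rintro ⟨p, hx, hy⟩
      have hx' : Nb x p.1 = p.2 := (hmemX x p).1 hx
      have hy' : y ∈ Nb x p.1 := hx'.symm ▸ hYsub p hy
      exact ((hmemNb x p.1 y).1 hy').1
    · intro hE
      have hb : (e y : ℕ) / k < t := by
        have h1 : (e y : ℕ) ≤ n := le_of_lt (e y).isLt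
        exact Nat.lt_succ_of_le (Nat.div_le_div_right h1)
      refine ⟨(⟨(e y : ℕ) / k, hb⟩, Nb x ⟨(e y : ℕ) / k, hb⟩), (hmemX x _).2 rfl, ?_⟩
      have hne : (Xs0 (⟨(e y : ℕ) / k, hb⟩, Nb x ⟨(e y : ℕ) / k, hb⟩)).Nonempty :=
        ⟨x, (hmemX x _).2 rfl⟩
      simp only [Ys0, if_pos hne]
      exact (hmemNb x _ y).2 ⟨hE, rfl⟩
  have cost : ∑ p : Fin t × Finset Y, ((Xs0 p).card + (Ys0 p).card) ≤
      t * (Fintype.card X + 2 ^ k * k) := by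
    rw [Fintype.sum_prod_type]
    have hbnd : ∀ b : Fin t, ∑ T : Finset Y, ((Xs0 (b, T)).card + (Ys0 (b, T)).card) ≤
        Fintype.card X + 2 ^ k * k := by
      intro b
      rw [Finset.sum_add_distrib]
      have hX : ∑ T : Finset Y, (Xs0 (b, T)).card = Fintype.card X := by
        rw [← Finset.card_univ]
        exact (Finset.card_eq_sum_card_fiberwise (f := fun x => Nb x b)
          (fun x _ => mem_univ _)).symm
      have hB : (univ.filter (fun y => (e y : ℕ) / k = (b : ℕ))).card ≤ k := by
        have : (univ.filter (fun y => (e y : ℕ) / k = (b : ℕ))).card ≤ (Finset.range k).card := by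
          apply Finset.card_le_card_of_injOn (fun y => (e y : ℕ) % k)
          · intro y _; exact Finset.mem_range.2 (Nat.mod_lt _ hk)
          · intro y1 hy1 y2 hy2 hmod
            simp only [mem_coe, mem_filter] at hy1 hy2
            have : (e y1 : ℕ) = (e y2 : ℕ) := by
              have d1 := Nat.div_add_mod (e y1 : ℕ) k
              have d2 := Nat.div_add_mod (e y2 : ℕ) k
              simp only at hmod
              rw [hy1.2] at d1
              rw [hy2.2] at d2
              omega
            exact e.injective (Fin.ext this)
        simpa using this
      have hYsum : ∑ T : Finset Y, (Ys0 (b, T)).card ≤ 2 ^ k * k := by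
        have h1 : ∑ T : Finset Y, (Ys0 (b, T)).card =
            ∑ T ∈ (univ.filter (fun y => (e y : ℕ) / k = (b : ℕ))).powerset,
              (Ys0 (b, T)).card := by
          refine (Finset.sum_subset (Finset.subset_univ _) ?_).symm
          intro T _ hT
          simp only [Ys0]
          rw [if_neg]
          · simp
          · rintro ⟨x, hx⟩
            have : Nb x b = T := (hmemX x (b, T)).1 hx
            exact hT (Finset.mem_powerset.2 (this ▸ hNbB x b))
        rw [h1]
        calc ∑ T ∈ (univ.filter (fun y => (e y : ℕ) / k = (b : ℕ))).powerset,
              (Ys0 (b, T)).card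
            ≤ ∑ _T ∈ (univ.filter (fun y => (e y : ℕ) / k = (b : ℕ))).powerset, k := by
              apply Finset.sum_le_sum
              intro T hT
              calc (Ys0 (b, T)).card ≤ T.card := Finset.card_le_card (hYsub (b, T))
                _ ≤ _ := le_trans (Finset.card_le_card (Finset.mem_powerset.1 hT)) hB
          _ = 2 ^ (univ.filter (fun y => (e y : ℕ) / k = (b : ℕ))).card * k := by
              rw [Finset.sum_const, Finset.card_powerset, smul_eq_mul]
          _ ≤ 2 ^ k * k := by
              exact Nat.mul_le_mul_right k (Nat.pow_le_pow_right (by norm_num) hB)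
      omega
    calc ∑ b : Fin t, ∑ T : Finset Y, ((Xs0 (b, T)).card + (Ys0 (b, T)).card)
        ≤ ∑ _b : Fin t, (Fintype.card X + 2 ^ k * k) := Finset.sum_le_sum (fun b _ => hbnd b)
      _ = t * (Fintype.card X + 2 ^ k * k) := by simp [mul_comm]
  let ι := (Fintype.equivFin (Fin t × Finset Y)).symm
  refine ⟨Fintype.card (Fin t × Finset Y), fun i => Xs0 (ι i), fun i => Ys0 (ι i), ?_, ?_, ?_⟩
  · intro i j hij
    exact key _ _ (fun h => hij (ι.injective h))
  · rw [← union]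
    ext a
    simp only [mem_biUnion, mem_univ, true_and]
    exact ⟨fun ⟨i, h⟩ => ⟨ι i, h⟩, fun ⟨p, h⟩ => ⟨ι.symm p, by simpa using h⟩⟩
  · calc ∑ i, ((Xs0 (ι i)).card + (Ys0 (ι i)).card)
        = ∑ p : Fin t × Finset Y, ((Xs0 p).card + (Ys0 p).card) :=
          Equiv.sum_comp ι (fun p => (Xs0 p).card + (Ys0 p).card)
      _ ≤ _ := cost

set_option maxHeartbeats 1600000 in
/-- Tuza's theorem: there is a threshold `n₀` such that for all `m ≥ n ≥ n₀` with
`n ≥ 10 (ln m)²`, every bipartite graph with parts of size `m` and `n` has a biclique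
decomposition `(X₁,Y₁), …, (X_q,Y_q)` with `∑ᵢ(|Xᵢ| + |Yᵢ|) ≤ 3mn / ln m`. -/
theorem tuza_biclique_decomposition :
    ∃ n₀ : ℕ, ∀ m n : ℕ, n₀ ≤ n → n ≤ m →
      (10 : ℝ) * Real.log m ^ 2 ≤ n →
      ∀ (X Y : Type) (_ : Fintype X) (_ : Fintype Y) (_ : DecidableEq X) (_ : DecidableEq Y),
        Fintype.card X = m → Fintype.card Y = n →
        ∀ E : Finset (X × Y),
          ∃ (q : ℕ) (Xs : Fin q → Finset X) (Ys : Fin q → Finset Y),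
            (∀ i j, i ≠ j → Disjoint (Xs i ×ˢ Ys i) (Xs j ×ˢ Ys j)) ∧
            Finset.univ.biUnion (fun i => Xs i ×ˢ Ys i) = E ∧
            ((∑ i, ((Xs i).card + (Ys i).card) : ℕ) : ℝ) ≤ 3 * m * n / Real.log m := by
  refine ⟨20736, ?_⟩
  intro m n hn₀ hnm hlog X Y _ _ _ _ hX hY E
  have hm₀ : (20736 : ℕ) ≤ m := hn₀.trans hnm
  set k := Nat.log 2 m / 2 with hkdef
  have hlog14 : 14 ≤ Nat.log 2 m := by
    have h2 : (2:ℕ)^14 ≤ m := by omega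
    exact (Nat.le_log_iff_pow_le (by norm_num) (by omega)).2 h2
  have hk7 : 7 ≤ k := by omega
  have hk : 0 < k := by omega
  obtain ⟨q, Xs, Ys, hdisj, hunion, hcost⟩ := tuza_aux X Y n k hk hY E
  refine ⟨q, Xs, Ys, hdisj, hunion, ?_⟩
  rw [hX] at hcost
  -- basic real facts
  have hM20 : (20736:ℝ) ≤ (m:ℝ) := by exact_mod_cast hm₀
  have hM0 : (0:ℝ) < (m:ℝ) := by linarith
  have hN20 : (20736:ℝ) ≤ (n:ℝ) := by exact_mod_cast hn₀
  have hN0 : (0:ℝ) < (n:ℝ) := by linarith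
  have hK0 : (0:ℝ) < (k:ℝ) := by exact_mod_cast hk
  have hK7 : (7:ℝ) ≤ (k:ℝ) := by exact_mod_cast hk7
  set L := Real.log (m:ℝ) with hLdef
  have hL1 : (1:ℝ) ≤ L := by
    rw [hLdef, Real.le_log_iff_exp_le hM0]
    calc Real.exp 1 ≤ 2.7182818286 := Real.exp_one_lt_d9.le
      _ ≤ (20736:ℝ) := by norm_num
      _ ≤ (m:ℝ) := hM20
  have hL0 : (0:ℝ) < L := by linarith
  have hlog2lt : Real.log 2 < 0.6931471808 := Real.log_two_lt_d9
  have hlog2gt : (0.6931471803:ℝ) < Real.log 2 := Real.log_two_gt_d9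
  -- L ≤ 2 K
  have hLK : L ≤ 2 * (k:ℝ) := by
    have hmlt : m < 2 ^ (2 * k + 2) :=
      lt_of_lt_of_le (Nat.lt_pow_succ_log_self (by norm_num) m)
        (Nat.pow_le_pow_right (by norm_num) (by omega))
    have hmlt' : (m:ℝ) ≤ (2:ℝ) ^ (2 * k + 2) := by exact_mod_cast hmlt.le
    have h1 : L ≤ ((2 * k + 2 : ℕ):ℝ) * Real.log 2 := by
      rw [← Real.log_pow]
      exact Real.log_le_log hM0 (by exact_mod_cast hmlt')
    have h2 : ((2 * k + 2 : ℕ):ℝ) = 2 * (k:ℝ) + 2 := by push_cast; ring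
    rw [h2] at h1
    nlinarith
  -- K ≤ L
  have hKL : (k:ℝ) ≤ L := by
    have hple : (2:ℕ) ^ (2 * k) ≤ m :=
      le_trans (Nat.pow_le_pow_right (by norm_num) (by omega)) (Nat.pow_log_le_self 2 (by omega))
    have hple' : ((2:ℝ)) ^ (2 * k) ≤ (m:ℝ) := by exact_mod_cast hple
    have h1 : ((2 * k : ℕ):ℝ) * Real.log 2 ≤ L := by
      rw [← Real.log_pow]
      exact Real.log_le_log (by positivity) hple'
    have h2 : ((2 * k : ℕ):ℝ) = 2 * (k:ℝ) := by push_cast; ring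
    rw [h2] at h1
    nlinarith
  -- 2^k ≤ sqrt m
  have hpow : (2:ℝ) ^ k ≤ Real.sqrt (m:ℝ) := by
    have hple : ((2:ℕ) ^ k) ^ 2 ≤ m := by
      rw [← pow_mul]
      exact le_trans (Nat.pow_le_pow_right (by norm_num) (by omega)) (Nat.pow_log_le_self 2 (by omega))
    have hple' : ((2:ℝ) ^ k) ^ 2 ≤ (m:ℝ) := by exact_mod_cast hple
    have := Real.sqrt_le_sqrt hple'
    rwa [Real.sqrt_sq (by positivity)] at this
  -- sqrt facts
  have hsq : Real.sqrt (m:ℝ) * Real.sqrt (m:ℝ) = (m:ℝ) := Real.mul_self_sqrt hM0.le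
  have hsqnn : (0:ℝ) ≤ Real.sqrt (m:ℝ) := Real.sqrt_nonneg _
  -- 3 L ≤ sqrt m
  have h3L : 3 * L ≤ Real.sqrt (m:ℝ) := by
    set s := Real.sqrt (Real.sqrt (m:ℝ)) with hsdef
    have hs12 : (12:ℝ) ≤ s := by
      have h144 : (144:ℝ) ≤ Real.sqrt (m:ℝ) := by
        have := Real.sqrt_le_sqrt hM20
        rwa [show (20736:ℝ) = 144^2 by norm_num, Real.sqrt_sq (by norm_num)] at this
      have := Real.sqrt_le_sqrt h144
      rwa [show (144:ℝ) = 12^2 by norm_num, Real.sqrt_sq (by norm_num)] at this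
    have hlogs : Real.log s = L / 4 := by
      rw [hsdef, Real.log_sqrt hsqnn, Real.log_sqrt hM0.le, hLdef]
      ring
    have hs0 : (0:ℝ) < s := by linarith
    have hls : Real.log s ≤ s - 1 := Real.log_le_sub_one_of_pos hs0
    have hss : s * s = Real.sqrt (m:ℝ) := Real.mul_self_sqrt hsqnn
    nlinarith
  -- sqrt m ≥ 3
  have hsq3 : (3:ℝ) ≤ Real.sqrt (m:ℝ) := by linarith
  -- main chain
  have hDle : ((n / k : ℕ):ℝ) ≤ (n:ℝ) / (k:ℝ) := Nat.cast_div_le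
  have hcostR : ((∑ i, ((Xs i).card + (Ys i).card) : ℕ) : ℝ) ≤
      (((n / k : ℕ):ℝ) + 1) * ((m:ℝ) + (2:ℝ) ^ k * (k:ℝ)) := by
    exact_mod_cast hcost
  have step2 : (((n / k : ℕ):ℝ) + 1) * ((m:ℝ) + (2:ℝ) ^ k * (k:ℝ)) ≤
      ((n:ℝ) / (k:ℝ) + 1) * ((m:ℝ) + Real.sqrt (m:ℝ) * (k:ℝ)) := by
    gcongr
  have step3 : ((n:ℝ) / (k:ℝ) + 1) * ((m:ℝ) + Real.sqrt (m:ℝ) * (k:ℝ)) =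
      (m:ℝ) * (n:ℝ) / (k:ℝ) + Real.sqrt (m:ℝ) * (n:ℝ) + (m:ℝ) + Real.sqrt (m:ℝ) * (k:ℝ) := by
    field_simp
    ring
  have h3Ln : 3 * L ≤ (n:ℝ) := by
    have ha : L * 3 ≤ L * (10 * L) := mul_le_mul_of_nonneg_left (by linarith) hL0.le
    nlinarith [hlog, ha]
  have hsqm : Real.sqrt (m:ℝ) ≤ (m:ℝ) := by
    have := mul_le_mul_of_nonneg_left (show (1:ℝ) ≤ Real.sqrt (m:ℝ) by linarith) hsqnn
    rw [mul_one, hsq] at this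
    exact this
  have h1 : (m:ℝ) * (n:ℝ) / (k:ℝ) ≤ 2 * ((m:ℝ) * (n:ℝ)) / L := by
    rw [div_le_div_iff₀ hK0 hL0]
    have := mul_le_mul_of_nonneg_left hLK (mul_nonneg hM0.le hN0.le)
    linarith
  have h2 : Real.sqrt (m:ℝ) * (n:ℝ) ≤ (m:ℝ) * (n:ℝ) / (3 * L) := by
    rw [le_div_iff₀ (by linarith)]
    have := mul_le_mul_of_nonneg_left h3L (mul_nonneg hsqnn hN0.le)
    nlinarith [hsq]
  have h3 : (m:ℝ) ≤ (m:ℝ) * (n:ℝ) / (3 * L) := by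
    rw [le_div_iff₀ (by linarith)]
    exact mul_le_mul_of_nonneg_left h3Ln hM0.le
  have h4 : Real.sqrt (m:ℝ) * (k:ℝ) ≤ (m:ℝ) * (n:ℝ) / (3 * L) := by
    rw [le_div_iff₀ (by linarith)]
    have a1 : (k:ℝ) * (3 * L) ≤ L * (3 * L) := mul_le_mul_of_nonneg_right hKL (by linarith)
    have a2 : L * (3 * L) ≤ (n:ℝ) := by nlinarith [hlog]
    have b1 : Real.sqrt (m:ℝ) * ((k:ℝ) * (3 * L)) ≤ Real.sqrt (m:ℝ) * (n:ℝ) :=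
      mul_le_mul_of_nonneg_left (by linarith) hsqnn
    have b2 : Real.sqrt (m:ℝ) * (n:ℝ) ≤ (m:ℝ) * (n:ℝ) :=
      mul_le_mul_of_nonneg_right hsqm hN0.le
    nlinarith [b1, b2]
  have hfinal : 2 * ((m:ℝ) * (n:ℝ)) / L + (m:ℝ) * (n:ℝ) / (3 * L) + (m:ℝ) * (n:ℝ) / (3 * L) +
      (m:ℝ) * (n:ℝ) / (3 * L) = 3 * (m:ℝ) * (n:ℝ) / L := by
    field_simp
    ring
  calc ((∑ i, ((Xs i).card + (Ys i).card) : ℕ) : ℝ)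
      ≤ (((n / k : ℕ):ℝ) + 1) * ((m:ℝ) + (2:ℝ) ^ k * (k:ℝ)) := hcostR
    _ ≤ ((n:ℝ) / (k:ℝ) + 1) * ((m:ℝ) + Real.sqrt (m:ℝ) * (k:ℝ)) := step2
    _ = (m:ℝ) * (n:ℝ) / (k:ℝ) + Real.sqrt (m:ℝ) * (n:ℝ) + (m:ℝ) + Real.sqrt (m:ℝ) * (k:ℝ) := step3
    _ ≤ 2 * ((m:ℝ) * (n:ℝ)) / L + (m:ℝ) * (n:ℝ) / (3 * L) + (m:ℝ) * (n:ℝ) / (3 * L) +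
        (m:ℝ) * (n:ℝ) / (3 * L) := by linarith
    _ = 3 * (m:ℝ) * (n:ℝ) / L := hfinal
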